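/- Under the hypotheses of the previous statement (type D: Σ_{j=0}^r b_j ϖ_j = Σ_{i=1}^r a_i α̂_i with integer coefficients), the total coefficient sum satisfies Σ_{i=1}^r a_i = −Σ_{k=0}^r ((r−k)(r−k−1)/2)·b_k = Σ_{k=1}^{r−2} k(r − (k+1)/2) b_k + (r(r−1)/4)(b_{r−1}+b_r). -/
import Mathlib


/-- The extended fundamental coweights `ϖ_i` of type `D_r` (coordinate `k` ↔ `ε_{k+1}`). -/
def varpiD (r i : ℕ) : Fin (r + 1) → ℤ := fun k =>
  if i = r - 1 then (if (k : ℕ) = r - 1 then -1 else 0)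
  else if i = r then (if (k : ℕ) = r then -1 else 0)
  else if i ≤ (k : ℕ) then -1 else 0

/-- The lifted simple coroots `α̂_i` of type `D_r` (coordinate `k` ↔ `ε_{k+1}`). -/
def hatD (r i : ℕ) : Fin (r + 1) → ℤ := fun k =>
  if i = r - 1 then
    (if (k : ℕ) = r - 2 then 1 else if (k : ℕ) = r - 1 then -1 else
      if (k : ℕ) = r then 1 else 0)
  else if i = r then
    (if (k : ℕ) = r - 2 then 1 else if (k : ℕ) = r - 1 then 1 else
      if (k : ℕ) = r then -1 else 0)
  else (if (k : ℕ) = i - 1 then 1 else if (k : ℕ) = i then -1 else 0)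

/-- `ℕ`-indexed version of `varpiD`. -/
def Vnat (r j n : ℕ) : ℤ :=
  if j = r - 1 then (if n = r - 1 then -1 else 0)
  else if j = r then (if n = r then -1 else 0)
  else if j ≤ n then -1 else 0

/-- `ℕ`-indexed version of `hatD`. -/
def Hnat (r i n : ℕ) : ℤ :=
  if i = r - 1 then
    (if n = r - 2 then 1 else if n = r - 1 then -1 else if n = r then 1 else 0)
  else if i = r then
    (if n = r - 2 then 1 else if n = r - 1 then 1 else if n = r then -1 else 0)
  else (if n = i - 1 then 1 else if n = i then -1 else 0)

lemma wH (r : ℕ) (hr : 4 ≤ r) (i : ℕ) (hi1 : 1 ≤ i) (hi2 : i ≤ r) :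
    ∑ n ∈ Finset.range (r + 1), ((r - 1 - n : ℕ) : ℤ) * Hnat r i n = 1 := by
  rcases eq_or_ne i (r - 1) with h1 | h1
  · have hpt : ∀ n ∈ Finset.range (r + 1), ((r - 1 - n : ℕ) : ℤ) * Hnat r i n =
        ((if n = r - 2 then ((r - 1 - n : ℕ) : ℤ) else 0)
          + (if n = r - 1 then -((r - 1 - n : ℕ) : ℤ) else 0))
          + (if n = r then ((r - 1 - n : ℕ) : ℤ) else 0) := by
      intro n _
      simp only [Hnat, if_pos h1]
      split_ifs <;> first | ring1 | (exfalso; omega)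
    rw [Finset.sum_congr rfl hpt, Finset.sum_add_distrib, Finset.sum_add_distrib,
      Finset.sum_ite_eq', Finset.sum_ite_eq', Finset.sum_ite_eq']
    simp only [Finset.mem_range]
    rw [if_pos (by omega), if_pos (by omega), if_pos (by omega)]
    omega
  · rcases eq_or_ne i r with h2 | h2
    · have hpt : ∀ n ∈ Finset.range (r + 1), ((r - 1 - n : ℕ) : ℤ) * Hnat r i n =
          ((if n = r - 2 then ((r - 1 - n : ℕ) : ℤ) else 0)
            + (if n = r - 1 then ((r - 1 - n : ℕ) : ℤ) else 0))
            + (if n = r then -((r - 1 - n : ℕ) : ℤ) else 0) := by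
        intro n _
        simp only [Hnat, if_neg h1, if_pos h2]
        split_ifs <;> first | ring1 | (exfalso; omega)
      rw [Finset.sum_congr rfl hpt, Finset.sum_add_distrib, Finset.sum_add_distrib,
        Finset.sum_ite_eq', Finset.sum_ite_eq', Finset.sum_ite_eq']
      simp only [Finset.mem_range]
      rw [if_pos (by omega), if_pos (by omega), if_pos (by omega)]
      omega
    · have hi3 : i ≤ r - 2 := by omega
      have hpt : ∀ n ∈ Finset.range (r + 1), ((r - 1 - n : ℕ) : ℤ) * Hnat r i n =
          (if n = i - 1 then ((r - 1 - n : ℕ) : ℤ) else 0)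
            + (if n = i then -((r - 1 - n : ℕ) : ℤ) else 0) := by
        intro n _
        simp only [Hnat, if_neg h1, if_neg h2]
        split_ifs <;> first | ring1 | (exfalso; omega)
      rw [Finset.sum_congr rfl hpt, Finset.sum_add_distrib,
        Finset.sum_ite_eq', Finset.sum_ite_eq']
      simp only [Finset.mem_range]
      rw [if_pos (by omega), if_pos (by omega)]
      omega

lemma wV (r : ℕ) (hr : 4 ≤ r) (j : ℕ) (hj : j ≤ r) :
    2 * ∑ n ∈ Finset.range (r + 1), ((r - 1 - n : ℕ) : ℤ) * Vnat r j n
      = -(((r : ℤ) - j) * ((r : ℤ) - j - 1)) := by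
  rcases eq_or_ne j (r - 1) with h1 | h1
  · have hpt : ∀ n ∈ Finset.range (r + 1), ((r - 1 - n : ℕ) : ℤ) * Vnat r j n =
        (if n = r - 1 then -((r - 1 - n : ℕ) : ℤ) else 0) := by
      intro n _
      simp only [Vnat, if_pos h1]
      split_ifs <;> ring
    rw [Finset.sum_congr rfl hpt, Finset.sum_ite_eq']
    rw [if_pos (by simp only [Finset.mem_range]; omega)]
    have e1 : r - 1 - (r - 1) = 0 := by omega
    have e2 : (r : ℤ) - ((j : ℕ) : ℤ) = 1 := by omega
    rw [e1, e2]
    norm_num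
  · rcases eq_or_ne j r with h2 | h2
    · have hpt : ∀ n ∈ Finset.range (r + 1), ((r - 1 - n : ℕ) : ℤ) * Vnat r j n =
          (if n = r then -((r - 1 - n : ℕ) : ℤ) else 0) := by
        intro n _
        simp only [Vnat, if_neg h1, if_pos h2]
        split_ifs <;> ring
      rw [Finset.sum_congr rfl hpt, Finset.sum_ite_eq']
      rw [if_pos (by simp only [Finset.mem_range]; omega)]
      have e1 : r - 1 - r = 0 := by omega
      have e2 : (r : ℤ) - ((j : ℕ) : ℤ) = 0 := by omega
      rw [e1, e2]
      norm_num
    · have hj2 : j ≤ r - 2 := by omega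
      have hpt : ∀ n ∈ Finset.range (r + 1), ((r - 1 - n : ℕ) : ℤ) * Vnat r j n =
          -(if j ≤ n then ((r - 1 - n : ℕ) : ℤ) else 0) := by
        intro n _
        simp only [Vnat, if_neg h1, if_neg h2]
        split_ifs <;> ring
      rw [Finset.sum_congr rfl hpt, Finset.sum_neg_distrib]
      have hs : ∑ n ∈ Finset.range (r + 1), (if j ≤ n then ((r - 1 - n : ℕ) : ℤ) else 0)
          = ∑ i ∈ Finset.range (r + 1 - j), ((r - 1 - (j + i) : ℕ) : ℤ) := by
        nth_rewrite 1 [Finset.range_eq_Ico]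
        rw [← Finset.sum_Ico_consecutive _ (Nat.zero_le j) (by omega : j ≤ r + 1)]
        have hz : ∑ n ∈ Finset.Ico 0 j, (if j ≤ n then ((r - 1 - n : ℕ) : ℤ) else 0) = 0 :=
          Finset.sum_eq_zero fun n hn => by
            rw [if_neg]; have := Finset.mem_Ico.mp hn; omega
        rw [hz, zero_add, Finset.sum_Ico_eq_sum_range]
        exact Finset.sum_congr rfl fun i _ => by rw [if_pos (by omega)]
      rw [hs]
      have hd : r + 1 - j = (r - 1 - j) + 1 + 1 := by omega
      rw [hd, Finset.sum_range_succ]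
      set d := r - 1 - j with hdd
      have hz2 : r - 1 - (j + (d + 1)) = 0 := by omega
      rw [hz2]
      have hre : ∀ i ∈ Finset.range (d + 1),
          ((r - 1 - (j + i) : ℕ) : ℤ) = ((d - i : ℕ) : ℤ) := fun i _ => by congr 1; omega
      rw [Finset.sum_congr rfl hre]
      have hrefl := Finset.sum_range_reflect (fun m : ℕ => ((m : ℕ) : ℤ)) (d + 1)
      simp only [Nat.add_sub_cancel] at hrefl
      rw [hrefl]
      have hg : (∑ i ∈ Finset.range (d + 1), (i : ℤ)) * 2 = ((d : ℤ) + 1) * d := by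
        have h0 := Finset.sum_range_id_mul_two (d + 1)
        have h0' := congrArg (Nat.cast : ℕ → ℤ) h0
        push_cast at h0'
        simpa using h0'
      have h3 : (r : ℤ) - j = (d : ℤ) + 1 := by omega
      have h4 : (r : ℤ) - j - 1 = (d : ℤ) := by omega
      rw [h4, h3]
      push_cast
      linarith [hg]

theorem stmt10 (r : ℕ) (hr : 4 ≤ r) (b a : ℕ → ℤ)
    (h : ∑ j ∈ Finset.range (r + 1), b j • varpiD r j
        = ∑ i ∈ Finset.Icc 1 r, a i • hatD r i) :
    2 * (∑ i ∈ Finset.Icc 1 r, a i)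
        = -∑ k ∈ Finset.range (r + 1), ((r : ℤ) - k) * ((r : ℤ) - k - 1) * b k ∧
    4 * (∑ i ∈ Finset.Icc 1 r, a i)
        = (∑ k ∈ Finset.Icc 1 (r - 2), 2 * (k : ℤ) * (2 * (r : ℤ) - k - 1) * b k)
          + (r : ℤ) * ((r : ℤ) - 1) * (b (r - 1) + b r) := by
  have hpt : ∀ n : ℕ, n ≤ r →
      ∑ j ∈ Finset.range (r + 1), b j * Vnat r j n
        = ∑ i ∈ Finset.Icc 1 r, a i * Hnat r i n := by
    intro n hn
    have hc := congrFun h (⟨n, by omega⟩ : Fin (r + 1))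
    simpa [Finset.sum_apply, Pi.smul_apply, smul_eq_mul, varpiD, hatD, Vnat, Hnat] using hc
  -- key identity 1
  have key1 : 2 * (∑ i ∈ Finset.Icc 1 r, a i)
      = -∑ k ∈ Finset.range (r + 1), ((r : ℤ) - k) * ((r : ℤ) - k - 1) * b k := by
    have e1 : ∑ n ∈ Finset.range (r + 1), ∑ i ∈ Finset.Icc 1 r,
        (2 * ((r - 1 - n : ℕ) : ℤ)) * (a i * Hnat r i n)
        = 2 * ∑ i ∈ Finset.Icc 1 r, a i := by
      rw [Finset.sum_comm, Finset.mul_sum]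
      refine Finset.sum_congr rfl fun i hi => ?_
      obtain ⟨hi1, hi2⟩ := Finset.mem_Icc.mp hi
      calc ∑ n ∈ Finset.range (r + 1), (2 * ((r - 1 - n : ℕ) : ℤ)) * (a i * Hnat r i n)
          = (2 * a i) * ∑ n ∈ Finset.range (r + 1), ((r - 1 - n : ℕ) : ℤ) * Hnat r i n := by
            rw [Finset.mul_sum]; exact Finset.sum_congr rfl fun n _ => by ring
        _ = 2 * a i := by rw [wH r hr i hi1 hi2, mul_one]
    have e2 : ∑ n ∈ Finset.range (r + 1), ∑ j ∈ Finset.range (r + 1),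
        (2 * ((r - 1 - n : ℕ) : ℤ)) * (b j * Vnat r j n)
        = -∑ k ∈ Finset.range (r + 1), ((r : ℤ) - k) * ((r : ℤ) - k - 1) * b k := by
      rw [Finset.sum_comm, ← Finset.sum_neg_distrib]
      refine Finset.sum_congr rfl fun j hj => ?_
      have hj' : j ≤ r := by have := Finset.mem_range.mp hj; omega
      have h2S := wV r hr j hj'
      calc ∑ n ∈ Finset.range (r + 1), (2 * ((r - 1 - n : ℕ) : ℤ)) * (b j * Vnat r j n)
          = (2 * b j) * ∑ n ∈ Finset.range (r + 1), ((r - 1 - n : ℕ) : ℤ) * Vnat r j n := by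
            rw [Finset.mul_sum]; exact Finset.sum_congr rfl fun n _ => by ring
        _ = -(((r : ℤ) - j) * ((r : ℤ) - j - 1) * b j) := by linear_combination b j * h2S
    rw [← e1, ← e2]
    refine Finset.sum_congr rfl fun n hn => ?_
    rw [← Finset.mul_sum, ← Finset.mul_sum, hpt n (by have := Finset.mem_range.mp hn; omega)]
  -- the constraint
  have hc : 2 * (∑ j ∈ Finset.range (r - 1), b j) + b (r - 1) + b r = 0 := by
    have h1 := hpt (r - 1) (by omega)
    have h2 := hpt r le_rfl
    have e1 : ∑ j ∈ Finset.range (r + 1), b j * Vnat r j (r - 1)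
        = -(∑ j ∈ Finset.range (r - 1), b j) - b (r - 1) := by
      rw [show r + 1 = (r - 1) + 1 + 1 from by omega, Finset.sum_range_succ,
        Finset.sum_range_succ, show r - 1 + 1 = r from by omega]
      have hA : Vnat r (r - 1) (r - 1) = -1 := by simp [Vnat]
      have hB : Vnat r r (r - 1) = 0 := by
        simp [Vnat, show ¬(r = r - 1) from by omega, show ¬(r - 1 = r) from by omega]
      have hC : ∑ j ∈ Finset.range (r - 1), b j * Vnat r j (r - 1)
          = -∑ j ∈ Finset.range (r - 1), b j := by
        rw [← Finset.sum_neg_distrib]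
        refine Finset.sum_congr rfl fun j hj => ?_
        have hj' : j < r - 1 := Finset.mem_range.mp hj
        have : Vnat r j (r - 1) = -1 := by
          simp [Vnat, show ¬(j = r - 1) from by omega, show ¬(j = r) from by omega,
            show j ≤ r - 1 from by omega]
        rw [this]; ring
      rw [hA, hB, hC]; ring
    have e2 : ∑ j ∈ Finset.range (r + 1), b j * Vnat r j r
        = -(∑ j ∈ Finset.range (r - 1), b j) - b r := by
      rw [show r + 1 = (r - 1) + 1 + 1 from by omega, Finset.sum_range_succ,
        Finset.sum_range_succ, show r - 1 + 1 = r from by omega]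
      have hA : Vnat r (r - 1) r = 0 := by
        simp [Vnat, show ¬(r = r - 1) from by omega]
      have hB : Vnat r r r = -1 := by
        simp [Vnat, show ¬(r = r - 1) from by omega]
      have hC : ∑ j ∈ Finset.range (r - 1), b j * Vnat r j r
          = -∑ j ∈ Finset.range (r - 1), b j := by
        rw [← Finset.sum_neg_distrib]
        refine Finset.sum_congr rfl fun j hj => ?_
        have hj' : j < r - 1 := Finset.mem_range.mp hj
        have : Vnat r j r = -1 := by
          simp [Vnat, show ¬(j = r - 1) from by omega, show ¬(j = r) from by omega,
            show j ≤ r from by omega]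
        rw [this]; ring
      rw [hA, hB, hC]; ring
    have e3 : ∑ i ∈ Finset.Icc 1 r, a i * Hnat r i (r - 1) = a r - a (r - 1) := by
      have hptw : ∀ i ∈ Finset.Icc 1 r, a i * Hnat r i (r - 1) =
          (if i = r - 1 then -a (r - 1) else 0) + (if i = r then a r else 0) := by
        intro i hi
        obtain ⟨hi1, hi2⟩ := Finset.mem_Icc.mp hi
        simp only [Hnat]
        split_ifs <;> subst_vars <;> first | ring1 | (exfalso; omega)
      rw [Finset.sum_congr rfl hptw, Finset.sum_add_distrib,
        Finset.sum_ite_eq', Finset.sum_ite_eq']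
      rw [if_pos (by simp only [Finset.mem_Icc]; omega),
        if_pos (by simp only [Finset.mem_Icc]; omega)]
      ring
    have e4 : ∑ i ∈ Finset.Icc 1 r, a i * Hnat r i r = a (r - 1) - a r := by
      have hptw : ∀ i ∈ Finset.Icc 1 r, a i * Hnat r i r =
          (if i = r - 1 then a (r - 1) else 0) + (if i = r then -a r else 0) := by
        intro i hi
        obtain ⟨hi1, hi2⟩ := Finset.mem_Icc.mp hi
        simp only [Hnat]
        split_ifs <;> subst_vars <;> first | ring1 | (exfalso; omega)
      rw [Finset.sum_congr rfl hptw, Finset.sum_add_distrib,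
        Finset.sum_ite_eq', Finset.sum_ite_eq']
      rw [if_pos (by simp only [Finset.mem_Icc]; omega),
        if_pos (by simp only [Finset.mem_Icc]; omega)]
      ring
    rw [e1, e3] at h1
    rw [e2, e4] at h2
    linarith
  refine ⟨key1, ?_⟩
  -- key identity 2
  have key2 : -∑ k ∈ Finset.range (r + 1), ((r : ℤ) - k) * ((r : ℤ) - k - 1) * b k
      = -∑ k ∈ Finset.range (r - 1), ((r : ℤ) - k) * ((r : ℤ) - k - 1) * b k := by
    rw [show r + 1 = (r - 1) + 1 + 1 from by omega, Finset.sum_range_succ,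
      Finset.sum_range_succ, show r - 1 + 1 = r from by omega]
    have hA : (r : ℤ) - ((r - 1 : ℕ) : ℤ) - 1 = 0 := by omega
    have hB : (r : ℤ) - ((r : ℕ) : ℤ) = 0 := by omega
    rw [hA, hB]
    ring
  have hIcc : ∑ k ∈ Finset.Icc 1 (r - 2), 2 * (k : ℤ) * (2 * (r : ℤ) - k - 1) * b k
      = ∑ k ∈ Finset.range (r - 1), 2 * (k : ℤ) * (2 * (r : ℤ) - k - 1) * b k := by
    rw [show Finset.Icc 1 (r - 2) = Finset.Ico 1 (r - 1) from by
        rw [← Finset.Ico_add_one_right_eq_Icc]; congr 1; omega,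
      Finset.range_eq_Ico,
      ← Finset.sum_Ico_consecutive _ (Nat.zero_le 1) (by omega : 1 ≤ r - 1)]
    have : ∑ k ∈ Finset.Ico (0 : ℕ) 1, 2 * (k : ℤ) * (2 * (r : ℤ) - k - 1) * b k = 0 := by
      rw [← Finset.range_eq_Ico, Finset.sum_range_one]
      norm_num
    rw [this, zero_add]
  have hbr : (r : ℤ) * ((r : ℤ) - 1) * (b (r - 1) + b r)
      = ∑ k ∈ Finset.range (r - 1), (-2 * (r : ℤ) * ((r : ℤ) - 1)) * b k := by
    have hs2 : ∑ k ∈ Finset.range (r - 1), (-2 * (r : ℤ) * ((r : ℤ) - 1)) * b k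
        = (-2 * (r : ℤ) * ((r : ℤ) - 1)) * ∑ k ∈ Finset.range (r - 1), b k :=
      (Finset.mul_sum _ _ _).symm
    rw [hs2]
    linear_combination ((r : ℤ) * ((r : ℤ) - 1)) * hc
  calc 4 * (∑ i ∈ Finset.Icc 1 r, a i) = 2 * (2 * ∑ i ∈ Finset.Icc 1 r, a i) := by ring
    _ = 2 * -∑ k ∈ Finset.range (r - 1), ((r : ℤ) - k) * ((r : ℤ) - k - 1) * b k := by
        rw [key1, key2]
    _ = ∑ k ∈ Finset.range (r - 1),
          (2 * (k : ℤ) * (2 * (r : ℤ) - k - 1) * b k + (-2 * (r : ℤ) * ((r : ℤ) - 1)) * b k) := by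
        rw [← Finset.sum_neg_distrib, Finset.mul_sum]
        exact Finset.sum_congr rfl fun k _ => by ring
    _ = (∑ k ∈ Finset.Icc 1 (r - 2), 2 * (k : ℤ) * (2 * (r : ℤ) - k - 1) * b k)
          + (r : ℤ) * ((r : ℤ) - 1) * (b (r - 1) + b r) := by
        rw [Finset.sum_add_distrib, hIcc, hbr]
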